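/- Let n ≥ 1 and let τ_0, …, τ_{n−1} > 0. Let T be the real (n+1) × (n+1) tridiagonal matrix with entries T_{0,0} = 2τ_0^{-1}, T_{n,n} = 2τ_{n−1}^{-1}, T_{i,i} = 2(τ_{i−1}^{-1} + τ_i^{-1}) for 0 < i < n, T_{i,i+1} = T_{i+1,i} = τ_i^{-1} for 0 ≤ i < n, and all other entries zero. Then T is invertible, and every D ∈ ℝ^{n+1} with T D = k satisfies ‖D‖_∞ ≤ (max_{0 ≤ i < n} τ_i) · ‖k‖_∞. -/
import Mathlib


open Finset

/-- The tridiagonal matrix of the natural cubic spline system, built from the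
knot spacings `τ_0, …, τ_{n-1} > 0`, is invertible, and any solution `D` of
`T D = k` satisfies `‖D‖_∞ ≤ (max_i τ_i) ‖k‖_∞`.
(Here `Fin (n+1) → ℝ` carries the sup norm.) -/
theorem stmt_4 (n : ℕ) (hn : 1 ≤ n) (τ : ℕ → ℝ) (hτ : ∀ i < n, 0 < τ i)
    (T : Matrix (Fin (n + 1)) (Fin (n + 1)) ℝ)
    (hT : ∀ i j : Fin (n + 1), T i j =
      if (i : ℕ) = (j : ℕ) then
        (if (i : ℕ) = 0 then 2 * (τ 0)⁻¹
         else if (i : ℕ) = n then 2 * (τ (n - 1))⁻¹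
         else 2 * ((τ ((i : ℕ) - 1))⁻¹ + (τ (i : ℕ))⁻¹))
      else if (i : ℕ) + 1 = (j : ℕ) then (τ (i : ℕ))⁻¹
      else if (j : ℕ) + 1 = (i : ℕ) then (τ (j : ℕ))⁻¹
      else 0) :
    IsUnit T ∧
    (∀ D k : Fin (n + 1) → ℝ, T.mulVec D = k →
      ‖D‖ ≤ ((Finset.range n).sup' ⟨0, Finset.mem_range.mpr hn⟩ τ) * ‖k‖) := by
  set M := ((Finset.range n).sup' ⟨0, Finset.mem_range.mpr hn⟩ τ) with hMdef
  have hMpos : 0 < M :=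
    lt_of_lt_of_le (hτ 0 hn) (Finset.le_sup' τ (Finset.mem_range.mpr hn))
  have hMτ : ∀ i < n, M⁻¹ ≤ (τ i)⁻¹ := by
    intro i hi
    have h1 : τ i ≤ M := Finset.le_sup' τ (Finset.mem_range.mpr hi)
    exact inv_anti₀ (hτ i hi) h1
  have hτinvpos : ∀ i < n, 0 < (τ i)⁻¹ := fun i hi => inv_pos.mpr (hτ i hi)
  -- off-diagonal entries are nonnegative
  have hoffnonneg : ∀ i j : Fin (n + 1), j ≠ i → 0 ≤ T i j := by
    intro i j hji
    rw [hT i j]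
    have hvij : (i : ℕ) ≠ (j : ℕ) := fun h => hji (Fin.ext h.symm)
    rw [if_neg hvij]
    split_ifs with h1 h2
    · have : (i : ℕ) < n := by omega
      exact le_of_lt (hτinvpos _ this)
    · have : (j : ℕ) < n := by omega
      exact le_of_lt (hτinvpos _ this)
    · exact le_refl 0
  -- key diagonal dominance bound
  have key : ∀ (D : Fin (n + 1) → ℝ) (i : Fin (n + 1)), (∀ j, |D j| ≤ |D i|) →
      M⁻¹ * |D i| ≤ |T.mulVec D i| := by
    intro D i hmax
    set S := ∑ j ∈ Finset.univ.erase i, T i j with hSdef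
    have hsplit : T.mulVec D i = T i i * D i + ∑ j ∈ Finset.univ.erase i, T i j * D j := by
      simp only [Matrix.mulVec, dotProduct]
      exact (Finset.add_sum_erase _ _ (Finset.mem_univ i)).symm
    -- bound the off-diagonal part
    have hoffbound : |∑ j ∈ Finset.univ.erase i, T i j * D j| ≤ S * |D i| := by
      calc |∑ j ∈ Finset.univ.erase i, T i j * D j|
          ≤ ∑ j ∈ Finset.univ.erase i, |T i j * D j| := Finset.abs_sum_le_sum_abs _ _
        _ ≤ ∑ j ∈ Finset.univ.erase i, T i j * |D i| := by
            apply Finset.sum_le_sum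
            intro j hj
            have hji : j ≠ i := (Finset.mem_erase.mp hj).1
            rw [abs_mul, abs_of_nonneg (hoffnonneg i j hji)]
            exact mul_le_mul_of_nonneg_left (hmax j) (hoffnonneg i j hji)
        _ = S * |D i| := by rw [hSdef, Finset.sum_mul]
    -- the diagonal gap
    have hgap : M⁻¹ ≤ T i i - S := by
      have hTii := hT i i
      rw [if_pos rfl] at hTii
      rcases Nat.eq_zero_or_pos (i : ℕ) with hi0 | hi0
      · -- i = 0 : row sum is τ 0⁻¹, diagonal 2 τ 0⁻¹
        rw [if_pos hi0] at hTii
        have hj1 : (1 : ℕ) < n + 1 := by omega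
        have hS : S = (τ 0)⁻¹ := by
          rw [hSdef]
          rw [Finset.sum_eq_single_of_mem (⟨1, hj1⟩ : Fin (n + 1))]
          · rw [hT]
            have h1 : ¬ ((i : ℕ) = ((⟨1, hj1⟩ : Fin (n + 1)) : ℕ)) := by simp [hi0]
            have h2 : (i : ℕ) + 1 = ((⟨1, hj1⟩ : Fin (n + 1)) : ℕ) := by simp [hi0]
            rw [if_neg h1, if_pos h2, hi0]
          · refine Finset.mem_erase.mpr ⟨?_, Finset.mem_univ _⟩
            intro h
            have := congrArg Fin.val h
            simp [hi0] at this
          · intro b hb hbne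
            have hbi : (b : ℕ) ≠ (i : ℕ) := by
              intro h; exact (Finset.mem_erase.mp hb).1 (Fin.ext h)
            have hb1 : (b : ℕ) ≠ 1 := by
              intro h; exact hbne (Fin.ext (by simp [h]))
            rw [hT]
            rw [if_neg (by omega), if_neg (by omega), if_neg (by omega)]
        rw [hTii, hS]
        have := hMτ 0 hn
        linarith
      rcases Nat.lt_or_ge (i : ℕ) n with hin | hin
      · -- interior: row sum τ (i-1)⁻¹ + τ i⁻¹, diagonal twice that
        rw [if_neg (by omega), if_neg (by omega)] at hTii
        have hj1 : ((i : ℕ) - 1) < n + 1 := by omega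
        have hj2 : ((i : ℕ) + 1) < n + 1 := by omega
        have hS : S = (τ ((i : ℕ) - 1))⁻¹ + (τ (i : ℕ))⁻¹ := by
          rw [hSdef]
          rw [Finset.sum_eq_add_of_mem (⟨(i : ℕ) - 1, hj1⟩ : Fin (n + 1))
            (⟨(i : ℕ) + 1, hj2⟩ : Fin (n + 1))]
          · congr 1
            · rw [hT]
              rw [if_neg (by simp; try omega), if_neg (by simp; try omega), if_pos (by simp; try omega)]
            · rw [hT]
              rw [if_neg (by simp; try omega), if_pos (by simp)]
          · refine Finset.mem_erase.mpr ⟨?_, Finset.mem_univ _⟩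
            intro h; have := congrArg Fin.val h; simp at this; try omega
          · refine Finset.mem_erase.mpr ⟨?_, Finset.mem_univ _⟩
            intro h; have := congrArg Fin.val h; simp at this; try omega
          · intro h; have := congrArg Fin.val h; simp at this; try omega
          · rintro b hb ⟨hb1, hb2⟩
            have hbi : (b : ℕ) ≠ (i : ℕ) := by
              intro h; exact (Finset.mem_erase.mp hb).1 (Fin.ext h)
            have hbv1 : (b : ℕ) ≠ (i : ℕ) - 1 := by
              intro h; exact hb1 (Fin.ext (by simp [h]))
            have hbv2 : (b : ℕ) ≠ (i : ℕ) + 1 := by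
              intro h; exact hb2 (Fin.ext (by simp [h]))
            rw [hT]
            rw [if_neg (by omega), if_neg (by omega), if_neg (by omega)]
        rw [hTii, hS]
        have h1 := hMτ (i : ℕ) hin
        have h2 := hτinvpos ((i : ℕ) - 1) (by omega)
        linarith
      · -- i = n
        have hineq : (i : ℕ) = n := by have := i.isLt; omega
        rw [if_neg (by omega), if_pos hineq] at hTii
        have hj1 : (n - 1 : ℕ) < n + 1 := by omega
        have hS : S = (τ (n - 1))⁻¹ := by
          rw [hSdef]
          rw [Finset.sum_eq_single_of_mem (⟨n - 1, hj1⟩ : Fin (n + 1))]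
          · rw [hT]
            rw [if_neg (by simp; try omega), if_neg (by simp; try omega), if_pos (by simp; try omega)]
          · refine Finset.mem_erase.mpr ⟨?_, Finset.mem_univ _⟩
            intro h; have := congrArg Fin.val h; simp at this; try omega
          · intro b hb hbne
            have hbi : (b : ℕ) ≠ (i : ℕ) := by
              intro h; exact (Finset.mem_erase.mp hb).1 (Fin.ext h)
            have hb1 : (b : ℕ) ≠ n - 1 := by
              intro h; exact hbne (Fin.ext (by simp [h]))
            have hbn : (b : ℕ) < n + 1 := b.isLt
            rw [hT]
            rw [if_neg (by omega), if_neg (by omega), if_neg (by omega)]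
        rw [hTii, hS]
        have := hMτ (n - 1) (by omega)
        linarith
    have hdiag : T i i * |D i| ≤ |T.mulVec D i| + S * |D i| := by
      have h1 : T i i * D i = T.mulVec D i - ∑ j ∈ Finset.univ.erase i, T i j * D j := by
        rw [hsplit]; ring
      have h2 : |T i i * D i| ≤ |T.mulVec D i| + |∑ j ∈ Finset.univ.erase i, T i j * D j| := by
        rw [h1]; exact abs_sub (T.mulVec D i) _
      have h3 : 0 ≤ T i i := by
        have := hgap
        have hS : 0 ≤ S := Finset.sum_nonneg fun j hj =>
          hoffnonneg i j (Finset.mem_erase.mp hj).1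
        nlinarith [inv_pos.mpr hMpos]
      rw [abs_mul, abs_of_nonneg h3] at h2
      linarith [hoffbound]
    calc M⁻¹ * |D i| ≤ (T i i - S) * |D i| :=
          mul_le_mul_of_nonneg_right hgap (abs_nonneg _)
      _ ≤ |T.mulVec D i| := by nlinarith [hdiag]
  -- from key: the norm bound
  have normbound : ∀ D k : Fin (n + 1) → ℝ, T.mulVec D = k → ‖D‖ ≤ M * ‖k‖ := by
    intro D k hDk
    obtain ⟨i, -, hi⟩ := Finset.exists_max_image (Finset.univ : Finset (Fin (n + 1)))
      (fun j => |D j|) ⟨0, Finset.mem_univ 0⟩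
    have hmax : ∀ j, |D j| ≤ |D i| := fun j => hi j (Finset.mem_univ j)
    have h1 := key D i hmax
    rw [hDk] at h1
    have h2 : |k i| ≤ ‖k‖ := by
      have := norm_le_pi_norm k i
      simpa [Real.norm_eq_abs] using this
    have h3 : |D i| ≤ M * ‖k‖ := by
      rw [inv_mul_le_iff₀ hMpos] at h1
      calc |D i| ≤ M * |k i| := h1
        _ ≤ M * ‖k‖ := mul_le_mul_of_nonneg_left h2 hMpos.le
    apply pi_norm_le_iff_of_nonneg (by positivity) |>.mpr
    intro j
    rw [Real.norm_eq_abs]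
    exact le_trans (hmax j) h3
  constructor
  · rw [Matrix.isUnit_iff_isUnit_det, isUnit_iff_ne_zero]
    intro hdet
    obtain ⟨v, hv, hv0⟩ := (Matrix.exists_mulVec_eq_zero_iff).mpr hdet
    have := normbound v 0 hv0
    simp only [norm_zero, mul_zero] at this
    exact hv (norm_le_zero_iff.mp this)
  · exact normbound
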